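/- For any two distinct rational unit directions ξ, ξ' ∈ S^{d−1} ∩ Q^d (d ≥ 3) and any v ∈ R^d, the set of v' ∈ R^d such that the periodized lines ℓ(v,ξ) := v + R ξ + Z^d and ℓ(v',ξ') := v' + R ξ' + Z^d intersect has Lebesgue measure zero; that is, L^d( R^d \ { v' ∈ R^d : ℓ(v,ξ) ∩ ℓ(v',ξ') = ∅ } ) = 0. -/

import Mathlib

open MeasureTheory Set
open scoped ENNReal NNReal RealInnerProductSpace BigOperators Pointwise

noncomputable section

abbrev Rd (d : ℕ) := EuclideanSpace ℝ (Fin d)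
/-- The integer vector `k` viewed as a point of `ℝ^d`. -/
def intVec {d : ℕ} (k : Fin d → ℤ) : Rd d := WithLp.toLp 2 (fun i => (k i : ℝ))

/-- `ξ` has rational coordinates. -/
def RationalVector {d : ℕ} (ξ : Rd d) : Prop := ∀ i, ∃ q : ℚ, ξ i = (q : ℝ)

/-- The ℤ^d-periodization of the line through `v` with direction `ξ`. -/
def perLine {d : ℕ} (v ξ : Rd d) : Set (Rd d) :=
  {x | ∃ (t : ℝ) (k : Fin d → ℤ), x = v + t • ξ + intVec k}

/-- For distinct rational unit directions `ξ ≠ ξ'` in dimension `d ≥ 3` and any `v`, the set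
of `v'` for which the periodized lines `ℓ(v,ξ)` and `ℓ(v',ξ')` intersect is Lebesgue-null. -/
theorem ae_disjoint_periodized_lines (d : ℕ) (hd : 3 ≤ d) (ξ ξ' : Rd d)
    (hξ : ‖ξ‖ = 1) (hξ' : ‖ξ'‖ = 1) (hq : RationalVector ξ) (hq' : RationalVector ξ')
    (hne : ξ ≠ ξ') (v : Rd d) :
    volume {v' : Rd d | (perLine v ξ ∩ perLine v' ξ').Nonempty} = 0 := by
  classical
  set V : Submodule ℝ (Rd d) := Submodule.span ℝ {ξ, ξ'} with hV
  have hVne : V ≠ ⊤ := by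
    intro h
    have h1 : (({ξ, ξ'} : Finset (Rd d)) : Set (Rd d)).finrank ℝ ≤ 2 :=
      (finrank_span_finset_le_card _).trans
        ((Finset.card_insert_le _ _).trans (by simp))
    rw [Set.finrank, show ((({ξ, ξ'} : Finset (Rd d)) : Set (Rd d))) = ({ξ, ξ'} : Set (Rd d))
      by simp, ← hV, h, finrank_top] at h1
    have h3 : Module.finrank ℝ (Rd d) = d := finrank_euclideanSpace_fin
    omega
  have hsub : {v' : Rd d | (perLine v ξ ∩ perLine v' ξ').Nonempty} ⊆
      ⋃ k : Fin d → ℤ, ((v + intVec k) +ᵥ (V : Set (Rd d))) := by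
    rintro v' ⟨x, ⟨t, k, rfl⟩, ⟨t', k', hx'⟩⟩
    refine mem_iUnion.2 ⟨fun i => k i - k' i, ?_⟩
    refine Set.mem_vadd_set.2 ⟨t • ξ - t' • ξ', ?_, ?_⟩
    · exact V.sub_mem (V.smul_mem _ (Submodule.subset_span (by simp)))
        (V.smul_mem _ (Submodule.subset_span (by simp)))
    · have hk : intVec (fun i => k i - k' i) = intVec k - intVec k' := by
        ext i
        simp [intVec]
      have : v' = v + t • ξ + intVec k - t' • ξ' - intVec k' := by
        rw [hx']; abel
      rw [vadd_eq_add, hk, this]; abel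
  refine measure_mono_null hsub (measure_iUnion_null fun k => ?_)
  rw [measure_vadd]
  exact Measure.addHaar_submodule volume V hVne
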